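/- For any Boolean function f : {0,1}^n → {0,1}, the total influence satisfies Inf(f) ≤ 4 · Var(f) · Cert(f). -/

import Mathlib

open Finset

variable {ι : Type*} [Fintype ι] [DecidableEq ι]

/-- `x` with its `i`-th bit flipped. -/
def flipAt (x : ι → Bool) (i : ι) : ι → Bool := Function.update x i (!x i)

/-- `S` is a certificate for `f`'s value at `x`. -/
def IsCert (f : (ι → Bool) → Bool) (x : ι → Bool) (S : Finset ι) : Prop :=
  ∀ y : ι → Bool, (∀ i ∈ S, y i = x i) → f y = f x

/-- Certificate complexity of `f` at `x`: minimum size of a certificate. -/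
noncomputable def certAt (f : (ι → Bool) → Bool) (x : ι → Bool) : ℕ :=
  sInf {k | ∃ S : Finset ι, IsCert f x S ∧ S.card = k}

/-- Certificate complexity of `f`. -/
noncomputable def certC (f : (ι → Bool) → Bool) : ℕ :=
  sSup {k | ∃ x : ι → Bool, certAt f x = k}

/-- Influence of coordinate `i` on `f` (uniform distribution). -/
noncomputable def influence (f : (ι → Bool) → Bool) (i : ι) : ℝ :=
  ((univ.filter fun x : ι → Bool => f (flipAt x i) ≠ f x).card : ℝ) / 2 ^ Fintype.card ι

/-- Total influence of `f`. -/
noncomputable def totalInf (f : (ι → Bool) → Bool) : ℝ := ∑ i : ι, influence f i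

/-- `Pr_{x uniform}[f(x) = b]`. -/
noncomputable def probEq (f : (ι → Bool) → Bool) (b : Bool) : ℝ :=
  ((univ.filter fun x : ι → Bool => f x = b).card : ℝ) / 2 ^ Fintype.card ι

/-- Variance of `f`: `Pr[f = 0] * Pr[f = 1]`. -/
noncomputable def fvar (f : (ι → Bool) → Bool) : ℝ := probEq f false * probEq f true


set_option linter.unusedSectionVars false

lemma univ_isCert (f : (ι → Bool) → Bool) (x : ι → Bool) : IsCert f x univ := by
  intro y hy
  have : y = x := funext fun i => hy i (mem_univ i)
  rw [this]


lemma sens_le_certC (f : (ι → Bool) → Bool) (x : ι → Bool) :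
    (univ.filter fun i => f (flipAt x i) ≠ f x).card ≤ certC f := by
  have hne : {k | ∃ S : Finset ι, IsCert f x S ∧ S.card = k}.Nonempty :=
    ⟨(univ : Finset ι).card, univ, univ_isCert f x, rfl⟩
  obtain ⟨S, hS, hcard⟩ := Nat.sInf_mem hne
  have hsub : (univ.filter fun i => f (flipAt x i) ≠ f x) ⊆ S := by
    intro i hi
    simp only [mem_filter, mem_univ, true_and] at hi
    by_contra h
    exact hi (hS (flipAt x i) (fun j hj => Function.update_of_ne (ne_of_mem_of_not_mem hj h) _ _))
  have h1 : (univ.filter fun i => f (flipAt x i) ≠ f x).card ≤ certAt f x := by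
    calc _ ≤ S.card := card_le_card hsub
    _ = certAt f x := hcard
  have hbdd : BddAbove {k | ∃ x : ι → Bool, certAt f x = k} := by
    refine ⟨Fintype.card ι, ?_⟩
    rintro k ⟨z, rfl⟩
    have : certAt f z ≤ (univ : Finset ι).card :=
      Nat.sInf_le ⟨univ, univ_isCert f z, rfl⟩
    simpa using this
  exact h1.trans (le_csSup hbdd ⟨x, rfl⟩)


lemma flip_flip' (x : ι → Bool) (i : ι) : flipAt (flipAt x i) i = x := by
  simp [flipAt, Function.update_idem]


noncomputable def sensN (f : (ι → Bool) → Bool) (x : ι → Bool) : ℕ :=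
  (univ.filter fun i => f (flipAt x i) ≠ f x).card


lemma totalInf_eq (f : (ι → Bool) → Bool) :
    totalInf f = ((∑ x : ι → Bool, sensN f x : ℕ) : ℝ) / 2 ^ Fintype.card ι := by
  have key : ∑ i : ι, (univ.filter fun x => f (flipAt x i) ≠ f x).card
      = ∑ x : ι → Bool, sensN f x := by
    simp only [sensN, Finset.card_filter]
    exact Finset.sum_comm
  unfold totalInf influence
  rw [← Finset.sum_div, ← Nat.cast_sum, key]


lemma pair_card (f : (ι → Bool) → Bool) (b : Bool) :
    (univ.filter fun p : (ι → Bool) × ι => f (flipAt p.1 p.2) ≠ f p.1 ∧ f p.1 = b).card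
      = ∑ x ∈ univ.filter (fun x => f x = b), sensN f x := by
  rw [Finset.card_filter, Fintype.sum_prod_type, Finset.sum_filter]
  refine Finset.sum_congr rfl fun x _ => ?_
  by_cases h : f x = b <;> simp [h, sensN, Finset.card_filter]


lemma pair_flip (f : (ι → Bool) → Bool) :
    (univ.filter fun p : (ι → Bool) × ι => f (flipAt p.1 p.2) ≠ f p.1 ∧ f p.1 = true).card
      = (univ.filter fun p : (ι → Bool) × ι => f (flipAt p.1 p.2) ≠ f p.1 ∧ f p.1 = false).card := by
  apply Finset.card_bij' (fun p _ => (flipAt p.1 p.2, p.2)) (fun p _ => (flipAt p.1 p.2, p.2))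
  · rintro ⟨x, i⟩ _; simp [flip_flip']
  · rintro ⟨x, i⟩ _; simp [flip_flip']
  · rintro ⟨x, i⟩ hp
    simp only [mem_filter, mem_univ, true_and] at hp ⊢
    obtain ⟨h1, h2⟩ := hp
    rw [flip_flip']
    refine ⟨fun hc => h1 hc.symm, ?_⟩
    cases hb : f (flipAt x i) with
    | false => rfl
    | true => exact absurd (hb.trans h2.symm) h1
  · rintro ⟨x, i⟩ hp
    simp only [mem_filter, mem_univ, true_and] at hp ⊢
    obtain ⟨h1, h2⟩ := hp
    rw [flip_flip']
    refine ⟨fun hc => h1 hc.symm, ?_⟩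
    cases hb : f (flipAt x i) with
    | false => exact absurd (hb.trans h2.symm) h1
    | true => rfl


lemma key_bound (f : (ι → Bool) → Bool) (b : Bool) :
    totalInf f ≤ 2 * (certC f : ℝ) * probEq f b := by
  have hD : (0:ℝ) < 2 ^ Fintype.card ι := by positivity
  have hsplit : ∑ x : ι → Bool, sensN f x
      = ∑ x ∈ univ.filter (fun x => f x = true), sensN f x
        + ∑ x ∈ univ.filter (fun x => f x = false), sensN f x := by
    rw [← Finset.sum_filter_add_sum_filter_not univ (fun x => f x = true)]
    congr 2
    apply Finset.filter_congr; intro x _; simp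
  have heq : ∑ x ∈ univ.filter (fun x => f x = true), sensN f x
      = ∑ x ∈ univ.filter (fun x => f x = false), sensN f x := by
    rw [← pair_card, ← pair_card, pair_flip]
  have hb : ∑ x : ι → Bool, sensN f x
      = 2 * ∑ x ∈ univ.filter (fun x => f x = b), sensN f x := by
    cases b <;> omega
  have hle : ∑ x ∈ univ.filter (fun x => f x = b), sensN f x
      ≤ (univ.filter (fun x : ι → Bool => f x = b)).card * certC f := by
    calc _ ≤ (univ.filter (fun x : ι → Bool => f x = b)).card • certC f :=
          Finset.sum_le_card_nsmul _ _ _ (fun x _ => sens_le_certC f x)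
    _ = _ := smul_eq_mul _ _
  rw [totalInf_eq, hb]
  have h2 : ((2 * ∑ x ∈ univ.filter (fun x => f x = b), sensN f x : ℕ) : ℝ)
      ≤ 2 * (certC f : ℝ) * ((univ.filter (fun x : ι → Bool => f x = b)).card : ℝ) := by
    have h3 : ((∑ x ∈ univ.filter (fun x => f x = b), sensN f x : ℕ) : ℝ)
        ≤ ((univ.filter (fun x : ι → Bool => f x = b)).card : ℝ) * certC f := by
      exact_mod_cast hle
    push_cast at h3 ⊢
    nlinarith
  calc ((2 * ∑ x ∈ univ.filter (fun x => f x = b), sensN f x : ℕ) : ℝ) / 2 ^ Fintype.card ι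
      ≤ (2 * (certC f : ℝ) * ((univ.filter (fun x : ι → Bool => f x = b)).card : ℝ))
          / 2 ^ Fintype.card ι := by gcongr
  _ = 2 * (certC f : ℝ) * probEq f b := by unfold probEq; ring


lemma probEq_sum (f : (ι → Bool) → Bool) : probEq f false + probEq f true = 1 := by
  have hD : (0:ℝ) < 2 ^ Fintype.card ι := by positivity
  unfold probEq
  rw [← add_div]
  have hcard : (univ.filter fun x : ι → Bool => f x = false).card
      + (univ.filter fun x : ι → Bool => f x = true).card = 2 ^ Fintype.card ι := by
    have h := Finset.card_filter_add_card_filter_not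
      (s := (univ : Finset (ι → Bool))) (p := fun x => f x = false)
    have h2 : (univ.filter fun x : ι → Bool => ¬ f x = false)
        = univ.filter fun x : ι → Bool => f x = true := by
      apply Finset.filter_congr; intro x _; simp
    rw [h2] at h
    rw [h, Finset.card_univ, Fintype.card_fun]
    simp
  rw [← Nat.cast_add, hcard]
  push_cast
  exact div_self (ne_of_gt hD)


theorem stmt4 {ι : Type*} [Fintype ι] [DecidableEq ι] (f : (ι → Bool) → Bool) :
    totalInf f ≤ 4 * fvar f * certC f := by
  have h0 : 0 ≤ probEq f false := by unfold probEq; positivity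
  have h1 : 0 ≤ probEq f true := by unfold probEq; positivity
  have hC : (0:ℝ) ≤ (certC f : ℝ) := Nat.cast_nonneg _
  have hsum := probEq_sum f
  unfold fvar
  rcases le_total (probEq f true) (probEq f false) with h | h
  · have hk := key_bound f true
    nlinarith [mul_nonneg (mul_nonneg hC h1) (by linarith : (0:ℝ) ≤ 2 * probEq f false - 1)]
  · have hk := key_bound f false
    nlinarith [mul_nonneg (mul_nonneg hC h0) (by linarith : (0:ℝ) ≤ 2 * probEq f true - 1)]
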